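/- As (x,y) → (0,0) with y < 0, the function U₀(x,y) = -e^y·sin x/(1 - 2e^y·cos x + e^{2y}) satisfies U₀(x,y) = -x/(x²+y²) + O(1); i.e. the difference U₀(x,y) + x/(x²+y²) remains bounded near the origin. -/

import Mathlib

noncomputable def U0 (x y : ℝ) : ℝ :=
  -Real.exp y * Real.sin x / (1 - 2 * Real.exp y * Real.cos x + Real.exp (2 * y))

theorem stmt17 :
    ∃ C > (0 : ℝ), ∃ δ > (0 : ℝ), ∀ x y : ℝ, y < 0 → x ^ 2 + y ^ 2 < δ ^ 2 →
      |U0 x y + x / (x ^ 2 + y ^ 2)| ≤ C := by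
  refine ⟨2, by norm_num, 1/2, by norm_num, ?_⟩
  intro x y hy hlt
  set z : ℂ := ⟨y, x⟩ with hzdef
  have hre : z.re = y := rfl
  have him : z.im = x := rfl
  have habs2 : (‖z‖) ^ 2 = x ^ 2 + y ^ 2 := by
    rw [Complex.sq_norm, Complex.normSq_apply, hre, him]; ring
  have hz0 : z ≠ 0 := by
    intro h
    have : z.re = 0 := by rw [h]; simp
    rw [hre] at this; linarith
  have hzpos : 0 < ‖z‖ := by
    simpa using norm_pos_iff.mpr hz0
  have habs : ‖z‖ < 1/2 := by
    nlinarith [habs2, hlt, hzpos]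
  have hne1 : Complex.exp z ≠ 1 := by
    intro h
    have h1 : ‖Complex.exp z‖ = Real.exp y := by
      rw [Complex.norm_exp, hre]
    rw [h] at h1
    simp at h1
    have : Real.exp y < 1 := Real.exp_lt_one_iff.mpr hy
    rw [← h1] at this; linarith
  have h1e : (1 : ℂ) - Complex.exp z ≠ 0 := by
    intro h
    apply hne1
    have := sub_eq_zero.mp h
    exact this.symm
  -- key bounds
  have hk : ‖Complex.exp z - 1 - z‖ ≤ (‖z‖) ^ 2 :=
    Complex.norm_exp_sub_one_sub_id_le (by linarith)
  have hlow : ‖z‖ / 2 ≤ ‖1 - Complex.exp z‖ := by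
    have h1 : ‖z‖ ≤ ‖Complex.exp z - 1‖ + ‖Complex.exp z - 1 - z‖ := by
      have he : z = (Complex.exp z - 1) - (Complex.exp z - 1 - z) := by ring
      calc ‖z‖ = ‖(Complex.exp z - 1) - (Complex.exp z - 1 - z)‖ := by
            rw [← he]
        _ ≤ _ := norm_sub_le _ _
    have h2 : ‖1 - Complex.exp z‖ = ‖Complex.exp z - 1‖ :=
      norm_sub_rev _ _
    nlinarith [hk, habs, hzpos]
  -- combine into single fraction
  have hg : (1 - Complex.exp z)⁻¹ + z⁻¹
      = (z + (1 - Complex.exp z)) / ((1 - Complex.exp z) * z) := by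
    field_simp
  have hnum : ‖z + (1 - Complex.exp z)‖ ≤ (‖z‖) ^ 2 := by
    have : z + (1 - Complex.exp z) = -(Complex.exp z - 1 - z) := by ring
    rw [this, norm_neg]; exact hk
  have hbound : ‖(1 - Complex.exp z)⁻¹ + z⁻¹‖ ≤ 2 := by
    have hBpos : 0 < ‖1 - Complex.exp z‖ := norm_pos_iff.mpr h1e
    rw [hg, norm_div, norm_mul]
    rw [div_le_iff₀ (mul_pos hBpos hzpos)]
    nlinarith [hnum, hlow, hzpos, norm_nonneg (1 - Complex.exp z)]
  -- the identity
  have hQpos : (0:ℝ) < (1 - Real.exp y * Real.cos x) ^ 2 + (Real.exp y * Real.sin x) ^ 2 := by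
    have := Complex.normSq_pos.mpr h1e
    have hns : Complex.normSq (1 - Complex.exp z) =
        (1 - Real.exp y * Real.cos x) ^ 2 + (Real.exp y * Real.sin x) ^ 2 := by
      rw [Complex.normSq_apply, Complex.sub_re, Complex.sub_im, Complex.exp_re, Complex.exp_im,
        hre, him, Complex.one_re, Complex.one_im]
      ring
    linarith [hns ▸ this]
  have hQ : 1 - 2 * Real.exp y * Real.cos x + Real.exp (2 * y)
      = (1 - Real.exp y * Real.cos x) ^ 2 + (Real.exp y * Real.sin x) ^ 2 := by
    have hs := Real.sin_sq_add_cos_sq x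
    have h2y : Real.exp (2 * y) = Real.exp y * Real.exp y := by
      rw [two_mul, Real.exp_add]
    rw [h2y]
    nlinarith [hs]
  have hr2 : (0:ℝ) < x ^ 2 + y ^ 2 := by nlinarith [hzpos, habs2]
  have hid : U0 x y + x / (x ^ 2 + y ^ 2)
      = -(((1 - Complex.exp z)⁻¹ + z⁻¹).im) := by
    have e1 : ((1 - Complex.exp z)⁻¹).im = (Real.exp y * Real.sin x) /
        ((1 - Real.exp y * Real.cos x) ^ 2 + (Real.exp y * Real.sin x) ^ 2) := by
      rw [Complex.inv_im, Complex.normSq_apply, Complex.sub_im, Complex.sub_re, Complex.exp_im,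
        Complex.exp_re, hre, him, Complex.one_re, Complex.one_im]
      ring
    have e2 : (z⁻¹).im = -x / (x ^ 2 + y ^ 2) := by
      rw [Complex.inv_im, Complex.normSq_apply, hre, him]
      ring
    rw [Complex.add_im, e1, e2, U0, hQ]
    ring
  rw [hid, abs_neg]
  calc |((1 - Complex.exp z)⁻¹ + z⁻¹).im| ≤ ‖(1 - Complex.exp z)⁻¹ + z⁻¹‖ :=
        Complex.abs_im_le_norm _
    _ ≤ 2 := hbound
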